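/- Let s : [0, ∞) → [0, 1] be nonincreasing and continuous with A_s = ∫₀^∞ s(t) dt < ∞, set B_s = A_s/2 and H_s(x) = x·s(x) + ∫_x^∞ s(t) dt, assume there exists a > 0 with H_s(a) = B_s, put p₀ = s(a), and define J_s(u) = B_s − p₀·u for 0 ≤ u ≤ a and J_s(u) = ∫_u^∞ s(t) dt for u ≥ a. Then J_s(u) ≥ B_s − p₀·u for all u ≥ 0. -/

import Mathlib

open MeasureTheory Set

/-- Global linear lower bound for the stop-loss envelope: in the setting of the sharp
stop-loss envelope construction (`s : [0,∞) → [0,1]` nonincreasing and continuous,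
`A_s = ∫₀^∞ s < ∞`, `B_s = A_s/2`, `H_s(x) = x s(x) + ∫_x^∞ s`, `a > 0` with
`H_s(a) = B_s`, `p₀ = s(a)`), the envelope `J_s(u)` (equal to `B_s − p₀ u` for
`0 ≤ u ≤ a` and to `∫_u^∞ s` for `u ≥ a`) satisfies `J_s(u) ≥ B_s − p₀ u` for all `u ≥ 0`. -/
theorem stmt5
    (s : ℝ → ℝ)
    (hs01 : ∀ t ∈ Set.Ici (0 : ℝ), s t ∈ Set.Icc (0 : ℝ) 1)
    (hmono : AntitoneOn s (Set.Ici 0))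
    (hcont : ContinuousOn s (Set.Ici 0))
    (hint : IntegrableOn s (Set.Ioi 0))
    (a : ℝ) (ha : 0 < a)
    (hHa : a * s a + ∫ t in Set.Ioi a, s t = (∫ t in Set.Ioi (0 : ℝ), s t) / 2) :
    ∀ u : ℝ, 0 ≤ u →
      (∫ t in Set.Ioi (0 : ℝ), s t) / 2 - s a * u ≤
        (if u ≤ a then (∫ t in Set.Ioi (0 : ℝ), s t) / 2 - s a * u
         else ∫ t in Set.Ioi u, s t) := by
  intro u hu
  by_cases h : u ≤ a
  · simp [h]
  · simp only [if_neg h]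
    push_neg at h
    have hau : a ≤ u := h.le
    have hsub : Set.Ioi a ⊆ Set.Ioi 0 := Set.Ioi_subset_Ioi ha.le
    have hint_a : IntegrableOn s (Set.Ioi a) := hint.mono_set hsub
    have hint_u : IntegrableOn s (Set.Ioi u) := hint.mono_set (Set.Ioi_subset_Ioi (ha.le.trans hau))
    have hint_Ioc : IntegrableOn s (Set.Ioc a u) :=
      hint_a.mono_set Set.Ioc_subset_Ioi_self
    have hsplit : (∫ t in Set.Ioi a, s t) =
        (∫ t in Set.Ioc a u, s t) + ∫ t in Set.Ioi u, s t := by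
      rw [← MeasureTheory.setIntegral_union]
      · rw [Set.Ioc_union_Ioi_eq_Ioi hau]
      · exact Set.Ioc_disjoint_Ioi le_rfl
      · exact measurableSet_Ioi
      · exact hint_Ioc
      · exact hint_u
    have hbound : (∫ t in Set.Ioc a u, s t) ≤ (u - a) * s a := by
      have : (∫ t in Set.Ioc a u, s t) ≤ ∫ _ in Set.Ioc a u, s a := by
        apply MeasureTheory.setIntegral_mono_on hint_Ioc (integrableOn_const measure_Ioc_lt_top.ne)
          measurableSet_Ioc
        intro t ht
        exact hmono (Set.mem_Ici.2 ha.le) (Set.mem_Ici.2 (ha.le.trans ht.1.le)) ht.1.le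
      simpa [Real.volume_Ioc, ENNReal.toReal_ofReal (sub_nonneg.2 hau), max_eq_left (sub_nonneg.2 hau)] using this
    have := hHa
    nlinarith [hbound, hsplit]
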